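/- Let Ω ⊂ ℂ^n be a bounded open set, let 0 < ε ≤ 2 and C > 0, and let μ be a finite Borel measure on Ω with μ(B(z,r) ∩ Ω) ≤ C r^{2n−2+ε} for all z ∈ cl(Ω) and all 0 < r < 1. Let ε₁ ∈ (0, ε/2) and let ν be a Borel measure on Ω with M := ∫_Ω dist(ξ, ∂Ω)^{3+ε₁} dν(ξ) < ∞. For 0 < δ < 1 set δ₁ := (1/2) δ^{1/2 + 3/ε} and Ω_δ := {z ∈ Ω : dist(z, ∂Ω) > δ}. Then there is a constant C' > 0, depending only on n, ε, ε₁ and C, such that ∫_{Ω_δ} [ δ₁^{−2n} ∫_0^{δ₁} r^{2n−1} ( ∫_0^r t^{1−2n} ν(B(z,t)) dt ) dr ] dμ(z) ≤ C' M δ^{ε/2 − ε₁}. -/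

import Mathlib

open MeasureTheory
open scoped ENNReal

/-- The Borel σ-algebra on `ℂⁿ` (with its Euclidean norm). -/
noncomputable instance (n : ℕ) : MeasurableSpace (EuclideanSpace ℂ (Fin n)) := WithLp.measurableSpace 2 _

instance (n : ℕ) : BorelSpace (EuclideanSpace ℂ (Fin n)) := PiLp.borelSpace 2

theorem myBallSubset {X : Type*} [NormedAddCommGroup X] [NormedSpace ℝ X] (Ω : Set X) (hΩ : IsOpen Ω)
    (z : X) (hz : z ∈ Ω) (t : ℝ) (ht : 0 < t) (h : t < Metric.infDist z (frontier Ω)) :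
    Metric.ball z t ⊆ Ω := by
  have hdisj : ∀ p ∈ Metric.ball z t, p ∉ frontier Ω := by
    intro p hp hpf
    have h1 : Metric.infDist z (frontier Ω) ≤ dist z p := Metric.infDist_le_dist_of_mem hpf
    rw [Metric.mem_ball, dist_comm] at hp
    linarith
  have hcover : Metric.ball z t ⊆ Ω ∪ (closure Ω)ᶜ := by
    intro p hp
    by_cases hpc : p ∈ closure Ω
    · left
      by_cases hpo : p ∈ interior Ω
      · rwa [hΩ.interior_eq] at hpo
      · exact absurd ⟨hpc, hpo⟩ (hdisj p hp)
    · right; exact hpc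
  intro w hw
  by_contra hwΩ
  have hwc : w ∈ (closure Ω)ᶜ := (hcover hw).resolve_left hwΩ
  obtain ⟨p, _, hpΩ, hpc⟩ := (convex_ball z t).isPreconnected Ω (closure Ω)ᶜ hΩ
    isClosed_closure.isOpen_compl hcover ⟨z, Metric.mem_ball_self ht, hz⟩ ⟨w, hw, hwc⟩
  exact hpc (subset_closure hpΩ)

theorem myMeasBall {X : Type*} [MeasurableSpace X] [NormedAddCommGroup X] [BorelSpace X]
    [SecondCountableTopology X]
    (σ : Measure X) [SFinite σ] :
    Measurable (fun p : X × ℝ => σ (Metric.ball p.1 p.2)) := by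
  have hso : MeasurableSet {q : (X × ℝ) × X | dist q.2 q.1.1 < q.1.2} :=
    (isOpen_lt (continuous_dist.comp (continuous_snd.prodMk continuous_fst.fst))
      continuous_fst.snd).measurableSet
  have h := measurable_measure_prodMk_left (ν := σ) hso
  convert h using 2 with p
  rfl

/-- Let `Ω ⊂ ℂⁿ` be a bounded open set, `0 < ε ≤ 2`, `C > 0`, `μ` a
finite Borel measure with `μ(B(z,r) ∩ Ω) ≤ C r^{2n−2+ε}` for all `z ∈ closure Ω`,
`0 < r < 1`.  Let `ε₁ ∈ (0, ε/2)` and `ν` a Borel measure with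
`M := ∫_Ω dist(ξ,∂Ω)^{3+ε₁} dν(ξ) < ∞`.  For `0 < δ < 1` set
`δ₁ := (1/2) δ^{1/2+3/ε}` and `Ω_δ := {z ∈ Ω : dist(z,∂Ω) > δ}`.  Then there is
`C' > 0`, depending only on `n, ε, ε₁, C`, with
`∫_{Ω_δ} [δ₁^{−2n} ∫_0^{δ₁} r^{2n−1} (∫_0^r t^{1−2n} ν(B(z,t)) dt) dr] dμ(z)
  ≤ C' M δ^{ε/2−ε₁}`. -/
theorem stmt_9 (n : ℕ) (hn : 0 < n) (Ω : Set (EuclideanSpace ℂ (Fin n)))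
    (hΩopen : IsOpen Ω) (hΩbdd : Bornology.IsBounded Ω)
    (ε C : ℝ) (hε0 : 0 < ε) (hε2 : ε ≤ 2) (hC : 0 < C)
    (μ : Measure (EuclideanSpace ℂ (Fin n))) [IsFiniteMeasure μ]
    (hμ : ∀ z ∈ closure Ω, ∀ r : ℝ, 0 < r → r < 1 →
      μ (Metric.ball z r ∩ Ω) ≤ ENNReal.ofReal (C * r ^ (2 * (n : ℝ) - 2 + ε)))
    (ε₁ : ℝ) (hε₁0 : 0 < ε₁) (hε₁ : ε₁ < ε / 2)
    (ν : Measure (EuclideanSpace ℂ (Fin n)))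
    (M : ℝ≥0∞)
    (hM : M = ∫⁻ ξ in Ω,
      ENNReal.ofReal (Metric.infDist ξ (frontier Ω) ^ (3 + ε₁)) ∂ν)
    (hMfin : M ≠ ⊤) :
    ∃ C' : ℝ, 0 < C' ∧ ∀ δ : ℝ, 0 < δ → δ < 1 →
      ∫⁻ z in {z ∈ Ω | δ < Metric.infDist z (frontier Ω)},
          ENNReal.ofReal ((1 / 2 * δ ^ (1 / 2 + 3 / ε)) ^ (-(2 * (n : ℝ)))) *
            ∫⁻ r in Set.Ioc (0 : ℝ) (1 / 2 * δ ^ (1 / 2 + 3 / ε)),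
              ENNReal.ofReal (r ^ (2 * (n : ℝ) - 1)) *
                ∫⁻ t in Set.Ioc (0 : ℝ) r,
                  ENNReal.ofReal (t ^ (1 - 2 * (n : ℝ))) * ν (Metric.ball z t) ∂volume
              ∂volume ∂μ
        ≤ ENNReal.ofReal (C' * δ ^ (ε / 2 - ε₁)) * M := by
  classical
  have hn1 : (1:ℝ) ≤ (n:ℝ) := by exact_mod_cast hn
  -- the weighted measure σ
  set g : EuclideanSpace ℂ (Fin n) → ℝ≥0∞ :=
    fun ξ => ENNReal.ofReal (Metric.infDist ξ (frontier Ω) ^ (3 + ε₁)) with hg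
  have hgmeas : Measurable g := by
    apply ENNReal.measurable_ofReal.comp
    exact ((Metric.continuous_infDist_pt _).rpow_const
      (fun x => Or.inr (by positivity))).measurable
  set σ : Measure (EuclideanSpace ℂ (Fin n)) := (ν.restrict Ω).withDensity g with hσ
  have hσuniv : σ Set.univ = M := by
    rw [hσ, withDensity_apply g MeasurableSet.univ, Measure.restrict_univ, hM]
  have hσfin : IsFiniteMeasure σ := ⟨by rw [hσuniv]; exact hMfin.lt_top⟩
  have hσcompl : σ Ωᶜ = 0 := by
    rw [hσ, withDensity_apply g hΩopen.measurableSet.compl,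
      Measure.restrict_restrict hΩopen.measurableSet.compl, Set.compl_inter_self,
      Measure.restrict_empty, lintegral_zero_measure]
  -- the constant
  refine ⟨C * 2 ^ (3 + ε₁ - ε) / ε, by positivity, ?_⟩
  intro δ hδ0 hδ1
  set d₁ : ℝ := 1 / 2 * δ ^ (1 / 2 + 3 / ε) with hd₁
  have hd₁pos : 0 < d₁ := by positivity
  have hd₁δ : d₁ ≤ δ / 2 := by
    have h1 : δ ^ (1 / 2 + 3 / ε) ≤ δ ^ (1:ℝ) := by
      apply Real.rpow_le_rpow_of_exponent_ge hδ0 hδ1.le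
      have h3 : (3:ℝ) / 2 ≤ 3 / ε := by
        apply div_le_div_of_nonneg_left (by norm_num) hε0 hε2
      linarith
    rw [Real.rpow_one] at h1
    rw [hd₁]; linarith
  have hd₁lt1 : d₁ < 1 := by linarith
  set S : Set (EuclideanSpace ℂ (Fin n)) := {z ∈ Ω | δ < Metric.infDist z (frontier Ω)}
    with hS
  have hSsub : S ⊆ Ω := fun z hz => hz.1
  have hSmeas : MeasurableSet S := by
    have : IsOpen S := by
      rw [hS]
      have : {z : EuclideanSpace ℂ (Fin n) | z ∈ Ω ∧ δ < Metric.infDist z (frontier Ω)}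
          = Ω ∩ {z | δ < Metric.infDist z (frontier Ω)} := rfl
      rw [this]
      exact hΩopen.inter (isOpen_lt continuous_const (Metric.continuous_infDist_pt _))
    exact this.measurableSet
  -- balls around points of S stay well inside Ω
  have hballΩ : ∀ z ∈ S, ∀ t ∈ Set.Ioc (0:ℝ) d₁, Metric.ball z t ⊆ Ω := by
    intro z hz t ht
    exact myBallSubset Ω hΩopen z hz.1 t ht.1 (lt_of_le_of_lt (by linarith [ht.2]) hz.2)
  have hballdist : ∀ z ∈ S, ∀ t ∈ Set.Ioc (0:ℝ) d₁, ∀ ξ ∈ Metric.ball z t,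
      δ / 2 ≤ Metric.infDist ξ (frontier Ω) := by
    intro z hz t ht ξ hξ
    have h1 : Metric.infDist z (frontier Ω) ≤ Metric.infDist ξ (frontier Ω) + dist z ξ :=
      Metric.infDist_le_infDist_add_dist
    rw [Metric.mem_ball, dist_comm] at hξ
    have := hz.2
    linarith [ht.2]
  -- comparison of ν and σ on small balls
  have hνσ : ∀ z ∈ S, ∀ t ∈ Set.Ioc (0:ℝ) d₁,
      ν (Metric.ball z t) ≤ ENNReal.ofReal ((2/δ) ^ (3 + ε₁)) * σ (Metric.ball z t) := by
    intro z hz t ht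
    have hsub := hballΩ z hz t ht
    have hν : (ν.restrict Ω) (Metric.ball z t) = ν (Metric.ball z t) := by
      rw [Measure.restrict_apply measurableSet_ball, Set.inter_eq_self_of_subset_left hsub]
    have hlow : ENNReal.ofReal ((δ/2) ^ (3 + ε₁)) * ν (Metric.ball z t)
        ≤ σ (Metric.ball z t) := by
      rw [hσ, withDensity_apply g measurableSet_ball, ← hν, ← setLIntegral_const]
      apply setLIntegral_mono hgmeas
      intro ξ hξ
      rw [hg]
      apply ENNReal.ofReal_le_ofReal
      exact Real.rpow_le_rpow (by positivity) (hballdist z hz t ht ξ hξ) (by positivity)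
    calc ν (Metric.ball z t)
        = ENNReal.ofReal ((2/δ) ^ (3 + ε₁)) *
            (ENNReal.ofReal ((δ/2) ^ (3 + ε₁)) * ν (Metric.ball z t)) := by
          rw [← mul_assoc, ← ENNReal.ofReal_mul (by positivity), ← Real.mul_rpow
            (by positivity) (by positivity)]
          rw [show (2/δ) * (δ/2) = 1 by field_simp]
          rw [Real.one_rpow, ENNReal.ofReal_one, one_mul]
      _ ≤ ENNReal.ofReal ((2/δ) ^ (3 + ε₁)) * σ (Metric.ball z t) :=
          mul_le_mul_right hlow _
  -- Step A : collapse the (r,t) double integral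
  have stepA : ∀ z : EuclideanSpace ℂ (Fin n),
      ENNReal.ofReal (d₁ ^ (-(2 * (n : ℝ)))) *
        (∫⁻ r in Set.Ioc (0:ℝ) d₁, ENNReal.ofReal (r ^ (2 * (n : ℝ) - 1)) *
          ∫⁻ t in Set.Ioc (0:ℝ) r,
            ENNReal.ofReal (t ^ (1 - 2 * (n : ℝ))) * ν (Metric.ball z t) ∂volume ∂volume)
      ≤ ∫⁻ t in Set.Ioc (0:ℝ) d₁,
          ENNReal.ofReal (t ^ (1 - 2 * (n : ℝ))) * ν (Metric.ball z t) ∂volume := by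
    intro z
    set G : ℝ → ℝ≥0∞ := fun r => ∫⁻ t in Set.Ioc (0:ℝ) r,
      ENNReal.ofReal (t ^ (1 - 2 * (n : ℝ))) * ν (Metric.ball z t) ∂volume with hG
    have h1 : (∫⁻ r in Set.Ioc (0:ℝ) d₁,
        ENNReal.ofReal (r ^ (2 * (n : ℝ) - 1)) * G r ∂volume)
        ≤ ∫⁻ _r in Set.Ioc (0:ℝ) d₁,
            ENNReal.ofReal (d₁ ^ (2 * (n : ℝ) - 1)) * G d₁ ∂volume := by
      apply setLIntegral_mono measurable_const
      intro r hr
      apply mul_le_mul'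
      · exact ENNReal.ofReal_le_ofReal
          (Real.rpow_le_rpow hr.1.le hr.2 (by linarith))
      · exact lintegral_mono_set (Set.Ioc_subset_Ioc_right hr.2)
    have h2 : (∫⁻ _r in Set.Ioc (0:ℝ) d₁,
        ENNReal.ofReal (d₁ ^ (2 * (n : ℝ) - 1)) * G d₁ ∂volume)
        = ENNReal.ofReal (d₁ ^ (2 * (n : ℝ) - 1)) * G d₁ * ENNReal.ofReal d₁ := by
      rw [setLIntegral_const, Real.volume_Ioc, sub_zero]
    calc ENNReal.ofReal (d₁ ^ (-(2 * (n : ℝ)))) *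
          (∫⁻ r in Set.Ioc (0:ℝ) d₁, ENNReal.ofReal (r ^ (2 * (n : ℝ) - 1)) * G r ∂volume)
        ≤ ENNReal.ofReal (d₁ ^ (-(2 * (n : ℝ)))) *
            (ENNReal.ofReal (d₁ ^ (2 * (n : ℝ) - 1)) * G d₁ * ENNReal.ofReal d₁) := by
          rw [← h2]; exact mul_le_mul_right h1 _
      _ = (ENNReal.ofReal (d₁ ^ (-(2 * (n : ℝ)))) * ENNReal.ofReal (d₁ ^ (2 * (n : ℝ) - 1))
            * ENNReal.ofReal d₁) * G d₁ := by ring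
      _ = G d₁ := by
          rw [← ENNReal.ofReal_mul (by positivity), ← ENNReal.ofReal_mul (by positivity),
            ← Real.rpow_add hd₁pos]
          nth_rewrite 2 [show d₁ = d₁ ^ (1:ℝ) from (Real.rpow_one d₁).symm]
          rw [← Real.rpow_add hd₁pos,
            show -(2 * (n:ℝ)) + (2 * (n:ℝ) - 1) + 1 = 0 by ring,
            Real.rpow_zero, ENNReal.ofReal_one, one_mul]
  -- measurability of the integrand for the Tonelli swap in (z,t)
  haveI := hσfin
  have hfmeas : Measurable (Function.uncurry fun (z : EuclideanSpace ℂ (Fin n)) (t : ℝ) =>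
      ENNReal.ofReal (t ^ (1 - 2 * (n:ℝ))) * σ (Metric.ball z t)) := by
    apply Measurable.mul
    · exact (ENNReal.measurable_ofReal.comp (measurable_id'.pow_const _)).comp measurable_snd
    · exact myMeasBall σ
  -- Step D : the inner z-integral, for fixed t
  have stepD : ∀ t ∈ Set.Ioc (0:ℝ) d₁,
      (∫⁻ z in S, ENNReal.ofReal (t ^ (1 - 2 * (n:ℝ))) * σ (Metric.ball z t) ∂μ)
      ≤ ENNReal.ofReal (t ^ (1 - 2 * (n:ℝ))) *
          (ENNReal.ofReal (C * t ^ (2 * (n:ℝ) - 2 + ε)) * M) := by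
    intro t ht
    rw [lintegral_const_mul' _ _ ENNReal.ofReal_ne_top]
    apply mul_le_mul_right
    set K : EuclideanSpace ℂ (Fin n) × EuclideanSpace ℂ (Fin n) → ℝ≥0∞ :=
      {q : EuclideanSpace ℂ (Fin n) × EuclideanSpace ℂ (Fin n) | dist q.2 q.1 < t}.indicator 1
      with hK
    have hKmeas : Measurable K :=
      measurable_one.indicator (isOpen_lt (continuous_dist.comp
        (continuous_snd.prodMk continuous_fst)) continuous_const).measurableSet
    have h1 : ∀ z : EuclideanSpace ℂ (Fin n), σ (Metric.ball z t) = ∫⁻ ξ, K (z, ξ) ∂σ := by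
      intro z
      rw [← lintegral_indicator_one measurableSet_ball]
      apply lintegral_congr
      intro ξ
      simp [hK, Set.indicator_apply, Metric.mem_ball]
    have h2 : ∀ ξ : EuclideanSpace ℂ (Fin n),
        (∫⁻ z in S, K (z, ξ) ∂μ) = (μ.restrict S) (Metric.ball ξ t) := by
      intro ξ
      rw [← lintegral_indicator_one measurableSet_ball]
      apply lintegral_congr
      intro z
      simp [hK, Set.indicator_apply, Metric.mem_ball, dist_comm]
    have hae : ∀ᵐ ξ ∂σ, (μ.restrict S) (Metric.ball ξ t)
        ≤ ENNReal.ofReal (C * t ^ (2 * (n:ℝ) - 2 + ε)) := by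
      have hsub2 : {ξ : EuclideanSpace ℂ (Fin n) |
          ¬ (μ.restrict S) (Metric.ball ξ t) ≤ ENNReal.ofReal (C * t ^ (2 * (n:ℝ) - 2 + ε))}
          ⊆ Ωᶜ := by
        intro ξ hξ hξΩ
        apply hξ
        rw [Measure.restrict_apply measurableSet_ball]
        calc μ (Metric.ball ξ t ∩ S) ≤ μ (Metric.ball ξ t ∩ Ω) :=
              measure_mono (Set.inter_subset_inter_right _ hSsub)
          _ ≤ ENNReal.ofReal (C * t ^ (2 * (n:ℝ) - 2 + ε)) :=
              hμ ξ (subset_closure hξΩ) t ht.1 (lt_of_le_of_lt ht.2 hd₁lt1)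
      exact (ae_iff).2 (measure_mono_null hsub2 hσcompl)
    calc (∫⁻ z in S, σ (Metric.ball z t) ∂μ)
        = ∫⁻ z in S, ∫⁻ ξ, K (z, ξ) ∂σ ∂μ := by simp_rw [h1]
      _ = ∫⁻ ξ, ∫⁻ z in S, K (z, ξ) ∂μ ∂σ := lintegral_lintegral_swap hKmeas.aemeasurable
      _ = ∫⁻ ξ, (μ.restrict S) (Metric.ball ξ t) ∂σ := by simp_rw [h2]
      _ ≤ ∫⁻ _ξ, ENNReal.ofReal (C * t ^ (2 * (n:ℝ) - 2 + ε)) ∂σ := lintegral_mono_ae hae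
      _ = ENNReal.ofReal (C * t ^ (2 * (n:ℝ) - 2 + ε)) * M := by
          rw [lintegral_const, hσuniv]
  -- Step E : the t-integral
  have hεne : ε ≠ 0 := hε0.ne'
  have hInt : IntegrableOn (fun t : ℝ => t ^ (ε - 1)) (Set.Ioc 0 d₁) := by
    have h := intervalIntegral.intervalIntegrable_rpow' (a := 0) (b := d₁)
      (show (-1:ℝ) < ε - 1 by linarith)
    rwa [intervalIntegrable_iff_integrableOn_Ioc_of_le hd₁pos.le] at h
  have hJ : (∫⁻ t in Set.Ioc (0:ℝ) d₁, ENNReal.ofReal (t ^ (ε - 1)) ∂volume)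
      = ENNReal.ofReal (d₁ ^ ε / ε) := by
    rw [← MeasureTheory.ofReal_integral_eq_lintegral_ofReal hInt ?_]
    · congr 1
      rw [← intervalIntegral.integral_of_le hd₁pos.le,
        integral_rpow (Or.inl (show (-1:ℝ) < ε - 1 by linarith)),
        show ε - 1 + 1 = ε by ring, Real.zero_rpow hεne, sub_zero]
    · filter_upwards [ae_restrict_mem measurableSet_Ioc] with t ht
      exact Real.rpow_nonneg ht.1.le _
  have stepE : (∫⁻ t in Set.Ioc (0:ℝ) d₁, ENNReal.ofReal (t ^ (1 - 2 * (n:ℝ))) *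
        (ENNReal.ofReal (C * t ^ (2 * (n:ℝ) - 2 + ε)) * M) ∂volume)
      ≤ (ENNReal.ofReal C * M) * ENNReal.ofReal (d₁ ^ ε / ε) := by
    have hpt : ∀ t ∈ Set.Ioc (0:ℝ) d₁,
        ENNReal.ofReal (t ^ (1 - 2 * (n:ℝ))) *
          (ENNReal.ofReal (C * t ^ (2 * (n:ℝ) - 2 + ε)) * M)
        = (ENNReal.ofReal C * M) * ENNReal.ofReal (t ^ (ε - 1)) := by
      intro t ht
      calc ENNReal.ofReal (t ^ (1 - 2 * (n:ℝ))) *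
            (ENNReal.ofReal (C * t ^ (2 * (n:ℝ) - 2 + ε)) * M)
          = (ENNReal.ofReal C * M) * (ENNReal.ofReal (t ^ (1 - 2 * (n:ℝ))) *
              ENNReal.ofReal (t ^ (2 * (n:ℝ) - 2 + ε))) := by
            rw [ENNReal.ofReal_mul hC.le]; ring
        _ = (ENNReal.ofReal C * M) * ENNReal.ofReal (t ^ (ε - 1)) := by
            rw [← ENNReal.ofReal_mul (Real.rpow_nonneg ht.1.le _),
              ← Real.rpow_add ht.1, show 1 - 2 * (n:ℝ) + (2 * (n:ℝ) - 2 + ε) = ε - 1 by ring]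
    refine le_of_eq ?_
    calc (∫⁻ t in Set.Ioc (0:ℝ) d₁, ENNReal.ofReal (t ^ (1 - 2 * (n:ℝ))) *
            (ENNReal.ofReal (C * t ^ (2 * (n:ℝ) - 2 + ε)) * M) ∂volume)
        = ∫⁻ t in Set.Ioc (0:ℝ) d₁,
            (ENNReal.ofReal C * M) * ENNReal.ofReal (t ^ (ε - 1)) ∂volume :=
          setLIntegral_congr_fun measurableSet_Ioc hpt
      _ = (ENNReal.ofReal C * M) *
            ∫⁻ t in Set.Ioc (0:ℝ) d₁, ENNReal.ofReal (t ^ (ε - 1)) ∂volume :=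
          lintegral_const_mul' _ _ (ENNReal.mul_ne_top ENNReal.ofReal_ne_top hMfin)
      _ = (ENNReal.ofReal C * M) * ENNReal.ofReal (d₁ ^ ε / ε) := by rw [hJ]
  -- the final real-number computation
  have hkey : (2/δ) ^ (3 + ε₁) * C * (d₁ ^ ε / ε)
      = C * 2 ^ (3 + ε₁ - ε) / ε * δ ^ (ε / 2 - ε₁) := by
    have hA1 : d₁ ^ ε = 2 ^ (-ε) * δ ^ (ε / 2 + 3) := by
      rw [hd₁, Real.mul_rpow (by norm_num) (Real.rpow_nonneg hδ0.le _),
        ← Real.rpow_mul hδ0.le, show (1/2 + 3/ε) * ε = ε/2 + 3 by field_simp,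
        one_div, Real.inv_rpow (by norm_num), ← Real.rpow_neg (by norm_num)]
    have hA2 : ((2:ℝ)/δ) ^ (3 + ε₁) = 2 ^ (3 + ε₁) / δ ^ (3 + ε₁) :=
      Real.div_rpow (by norm_num : (0:ℝ) ≤ 2) hδ0.le _
    have hA3 : (2:ℝ) ^ (3 + ε₁ - ε) = 2 ^ (3 + ε₁) * 2 ^ (-ε) := by
      rw [← Real.rpow_add (by norm_num : (0:ℝ) < 2)]
      congr 1
    have hA4 : δ ^ (ε / 2 + 3) = δ ^ (ε / 2 - ε₁) * δ ^ (3 + ε₁) := by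
      rw [← Real.rpow_add hδ0]
      congr 1
      ring
    have hδp : δ ^ (3 + ε₁) ≠ 0 := (Real.rpow_pos_of_pos hδ0 _).ne'
    rw [hA1, hA2, hA3, hA4]
    field_simp
  -- assemble everything
  calc ∫⁻ z in S, ENNReal.ofReal (d₁ ^ (-(2 * (n:ℝ)))) *
          ∫⁻ r in Set.Ioc (0:ℝ) d₁, ENNReal.ofReal (r ^ (2 * (n:ℝ) - 1)) *
            ∫⁻ t in Set.Ioc (0:ℝ) r, ENNReal.ofReal (t ^ (1 - 2 * (n:ℝ))) *
              ν (Metric.ball z t) ∂volume ∂volume ∂μ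
      ≤ ∫⁻ z in S, ∫⁻ t in Set.Ioc (0:ℝ) d₁,
          ENNReal.ofReal (t ^ (1 - 2 * (n:ℝ))) * ν (Metric.ball z t) ∂volume ∂μ :=
        lintegral_mono fun z => stepA z
    _ ≤ ∫⁻ z in S, ENNReal.ofReal ((2/δ) ^ (3 + ε₁)) *
          ∫⁻ t in Set.Ioc (0:ℝ) d₁,
            ENNReal.ofReal (t ^ (1 - 2 * (n:ℝ))) * σ (Metric.ball z t) ∂volume ∂μ := by
        apply lintegral_mono_ae ((ae_restrict_iff' hSmeas).2 (ae_of_all _ ?_))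
        intro z hz
        rw [← lintegral_const_mul' _ _ ENNReal.ofReal_ne_top]
        apply lintegral_mono_ae ((ae_restrict_iff' measurableSet_Ioc).2 (ae_of_all _ ?_))
        intro t ht
        rw [← mul_assoc, mul_comm (ENNReal.ofReal ((2/δ) ^ (3 + ε₁))), mul_assoc]
        exact mul_le_mul_right (hνσ z hz t ht) _
    _ = ENNReal.ofReal ((2/δ) ^ (3 + ε₁)) * ∫⁻ z in S, ∫⁻ t in Set.Ioc (0:ℝ) d₁,
          ENNReal.ofReal (t ^ (1 - 2 * (n:ℝ))) * σ (Metric.ball z t) ∂volume ∂μ :=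
        lintegral_const_mul' _ _ ENNReal.ofReal_ne_top
    _ = ENNReal.ofReal ((2/δ) ^ (3 + ε₁)) * ∫⁻ t in Set.Ioc (0:ℝ) d₁, ∫⁻ z in S,
          ENNReal.ofReal (t ^ (1 - 2 * (n:ℝ))) * σ (Metric.ball z t) ∂μ ∂volume := by
        rw [lintegral_lintegral_swap hfmeas.aemeasurable]
    _ ≤ ENNReal.ofReal ((2/δ) ^ (3 + ε₁)) * ((ENNReal.ofReal C * M) *
          ENNReal.ofReal (d₁ ^ ε / ε)) := by
        apply mul_le_mul_right
        refine le_trans (lintegral_mono_ae ((ae_restrict_iff' measurableSet_Ioc).2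
          (ae_of_all _ stepD))) stepE
    _ ≤ ENNReal.ofReal (C * 2 ^ (3 + ε₁ - ε) / ε * δ ^ (ε / 2 - ε₁)) * M := by
        rw [← hkey]
        refine le_of_eq ?_
        calc ENNReal.ofReal ((2/δ) ^ (3 + ε₁)) * ((ENNReal.ofReal C * M) *
              ENNReal.ofReal (d₁ ^ ε / ε))
            = (ENNReal.ofReal ((2/δ) ^ (3 + ε₁)) * ENNReal.ofReal C *
                ENNReal.ofReal (d₁ ^ ε / ε)) * M := by ring
          _ = ENNReal.ofReal ((2/δ) ^ (3 + ε₁) * C * (d₁ ^ ε / ε)) * M := by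
              rw [← ENNReal.ofReal_mul (by positivity), ← ENNReal.ofReal_mul (by positivity)]
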